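/- Let N ≥ n ≥ 1 and x ∈ Δ^N. Then |κ^N_n(x,π) − κ∞_n(x,π)| ≤ n²/N for every partition π of [n], where κ^N_n(x,·) is the urn-without-replacement partition kernel and κ∞_n(x,·) is the Kingman paintbox (with-replacement) kernel. -/

import Mathlib

open MeasureTheory Set

/-- Partial sums of a paintbox: left endpoint of the `ℓ`-th paintbox interval. -/
noncomputable def cumul (x : ℕ → ℝ) (ℓ : ℕ) : ℝ := ∑ k ∈ Finset.range ℓ, x k

/-- Kingman paintbox (with-replacement) kernel. -/
noncomputable def paintbox (n : ℕ) (x : ℕ → ℝ) (P : Fin n → Fin n → Prop) : ℝ :=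
  ((Measure.pi fun _ : Fin n => volume.restrict (Icc (0:ℝ) 1))
    {u | ∀ i j, P i j ↔ (i = j ∨ ∃ ℓ : ℕ,
      u i ∈ Ioo (cumul x ℓ) (cumul x ℓ + x ℓ) ∧
      u j ∈ Ioo (cumul x ℓ) (cumul x ℓ + x ℓ))}).toReal

open scoped Classical in
/-- Urn-without-replacement partition kernel. -/
noncomputable def urnKernel (N n : ℕ) (c : Fin N → ℕ) (P : Fin n → Fin n → Prop) : ℝ :=
  ((Finset.univ.filter fun f : Fin n ↪ Fin N =>
      ∀ i j, P i j ↔ c (f i) = c (f j)).card : ℝ) /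
    (Fintype.card (Fin n ↪ Fin N) : ℝ)

open scoped Classical

/-- `1 - ∑ f ≤ ∏ (1 - f)` for `f` with values in `[0,1]`. -/
lemma aux_one_sub_sum_le_prod {ι : Type*} (s : Finset ι) (f : ι → ℝ)
    (h0 : ∀ i ∈ s, 0 ≤ f i) (h1 : ∀ i ∈ s, f i ≤ 1) :
    1 - ∑ i ∈ s, f i ≤ ∏ i ∈ s, (1 - f i) := by
  induction s using Finset.cons_induction with
  | empty => simp
  | cons a s ha ih =>
    rw [Finset.prod_cons, Finset.sum_cons]
    have h0a : 0 ≤ f a := h0 a (Finset.mem_cons_self _ _)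
    have h1a : f a ≤ 1 := h1 a (Finset.mem_cons_self _ _)
    have ih' : 1 - ∑ i ∈ s, f i ≤ ∏ i ∈ s, (1 - f i) :=
      ih (fun i hi => h0 i (Finset.mem_cons_of_mem hi))
        (fun i hi => h1 i (Finset.mem_cons_of_mem hi))
    have hs0 : 0 ≤ ∑ i ∈ s, f i := Finset.sum_nonneg fun i hi => h0 i (Finset.mem_cons_of_mem hi)
    nlinarith [mul_le_mul_of_nonneg_left ih' (by linarith : (0:ℝ) ≤ 1 - f a)]

/-- The paintbox kernel as a with-replacement counting ratio. -/
lemma paintbox_eq_count (N n : ℕ) (hn : 1 ≤ n) (hN : n ≤ N)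
    (x : ℕ → ℝ)
    (hx0 : ∀ i, 0 ≤ x i) (hxs : Summable x) (hx1 : ∑' i, x i = 1)
    (c : Fin N → ℕ)
    (hc : ∀ ℓ, ((Finset.univ.filter fun a => c a = ℓ).card : ℝ) = (N : ℝ) * x ℓ)
    (P : Fin n → Fin n → Prop) (hP : Equivalence P) :
    paintbox n x P =
      ((Finset.univ.filter fun f : Fin n → Fin N =>
        ∀ i j, P i j ↔ c (f i) = c (f j)).card : ℝ) / (N : ℝ) ^ n := by
  have hNpos : 0 < N := lt_of_lt_of_le hn hN
  set ν : Measure ℝ := volume.restrict (Icc (0:ℝ) 1) with hνdef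
  set μ : Measure (Fin n → ℝ) := Measure.pi fun _ : Fin n => ν with hμdef
  set B : ℕ → Set ℝ := fun ℓ => Ioo (cumul x ℓ) (cumul x ℓ + x ℓ) with hBdef
  -- basic facts about cumul and blocks
  have hcum : ∀ ℓ, cumul x ℓ + x ℓ = cumul x (ℓ+1) := by
    intro ℓ; simp [cumul, Finset.sum_range_succ]
  have hc0 : ∀ ℓ, 0 ≤ cumul x ℓ := fun ℓ => Finset.sum_nonneg fun i _ => hx0 i
  have hc1 : ∀ ℓ, cumul x ℓ ≤ 1 := by
    intro ℓ
    rw [← hx1]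
    exact Summable.sum_le_tsum (Finset.range ℓ) (fun i _ => hx0 i) hxs
  have hcmono : Monotone (cumul x) := by
    apply monotone_nat_of_le_succ
    intro ℓ
    rw [← hcum ℓ]
    linarith [hx0 ℓ]
  have hBsub : ∀ ℓ, B ℓ ⊆ Icc (0:ℝ) 1 := by
    intro ℓ t ht
    rcases ht with ⟨h1, h2⟩
    constructor
    · linarith [hc0 ℓ]
    · have := hc1 (ℓ+1)
      rw [← hcum ℓ] at this
      linarith
  have hBdisj : ∀ ℓ ℓ', ℓ ≠ ℓ' → ∀ t, t ∈ B ℓ → t ∈ B ℓ' → False := by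
    have key : ∀ ℓ ℓ', ℓ < ℓ' → ∀ t, t ∈ B ℓ → t ∈ B ℓ' → False := by
      intro ℓ ℓ' hlt t ⟨_, h2⟩ ⟨h3, _⟩
      have : cumul x (ℓ+1) ≤ cumul x ℓ' := hcmono hlt
      rw [← hcum ℓ] at this
      linarith
    intro ℓ ℓ' hne t h h'
    rcases lt_or_gt_of_ne hne with hlt | hlt
    · exact key ℓ ℓ' hlt t h h'
    · exact key ℓ' ℓ hlt t h' h
  have hνB : ∀ ℓ, ν (B ℓ) = ENNReal.ofReal (x ℓ) := by
    intro ℓ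
    rw [hνdef, Measure.restrict_apply measurableSet_Ioo,
      Set.inter_eq_left.mpr (hBsub ℓ), Real.volume_Ioo]
    congr 1
    ring
  have hνuniv : ν Set.univ = 1 := by
    rw [hνdef, Measure.restrict_apply_univ, Real.volume_Icc]
    norm_num
  have hνU : ν (⋃ ℓ, B ℓ) = 1 := by
    rw [measure_iUnion (fun ℓ ℓ' hne => Set.disjoint_left.mpr
        (fun t ht ht' => hBdisj ℓ ℓ' hne t ht ht')) (fun ℓ => measurableSet_Ioo)]
    simp_rw [hνB]
    rw [← ENNReal.ofReal_tsum_of_nonneg hx0 hxs, hx1]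
    norm_num
  -- the full-measure set S
  set S : Set (Fin n → ℝ) := Set.univ.pi (fun _ => ⋃ ℓ, B ℓ) with hSdef
  have hSmeas : MeasurableSet S :=
    MeasurableSet.univ_pi fun _ => MeasurableSet.iUnion fun ℓ => measurableSet_Ioo
  have hμS : μ S = 1 := by
    rw [hSdef, hμdef, Measure.pi_pi]
    simp [hνU]
  have hμuniv : μ Set.univ = 1 := by
    rw [hμdef, Measure.pi_univ]
    simp [hνuniv]
  have hμSc : μ Sᶜ = 0 := by
    rw [measure_compl hSmeas (by rw [hμS]; exact ENNReal.one_ne_top), hμuniv, hμS, tsub_self]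
  -- the event
  set E : Set (Fin n → ℝ) := {u | ∀ i j, P i j ↔ (i = j ∨ ∃ ℓ : ℕ,
      u i ∈ B ℓ ∧ u j ∈ B ℓ)} with hEdef
  have hμE : μ E = μ (E ∩ S) := by
    apply le_antisymm
    · calc μ E ≤ μ ((E ∩ S) ∪ Sᶜ) := by
            apply measure_mono
            intro u hu
            by_cases h : u ∈ S
            · exact Or.inl ⟨hu, h⟩
            · exact Or.inr h
        _ ≤ μ (E ∩ S) + μ Sᶜ := measure_union_le _ _
        _ = μ (E ∩ S) := by rw [hμSc, add_zero]
    · exact measure_mono Set.inter_subset_left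
  -- decomposition into boxes
  set compat : (Fin n → ℕ) → Prop := fun g => ∀ i j, P i j ↔ (i = j ∨ g i = g j) with hcompatdef
  set Box : (Fin n → ℕ) → Set (Fin n → ℝ) := fun g => Set.univ.pi (fun i => B (g i)) with hBoxdef
  have hES : E ∩ S = ⋃ g : Fin n → ℕ, ⋃ _ : compat g, Box g := by
    ext u
    constructor
    · rintro ⟨huE, huS⟩
      have huS' : ∀ i, ∃ ℓ, u i ∈ B ℓ := by
        intro i
        simpa using huS i (Set.mem_univ i)
      choose g hg using huS'
      refine Set.mem_iUnion.mpr ⟨g, Set.mem_iUnion.mpr ⟨?_, ?_⟩⟩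
      · intro i j
        rw [huE i j]
        constructor
        · rintro (h | ⟨ℓ, hi, hj⟩)
          · exact Or.inl h
          · refine Or.inr ?_
            have hgi : g i = ℓ := by
              by_contra he
              exact hBdisj (g i) ℓ he (u i) (hg i) hi
            have hgj : g j = ℓ := by
              by_contra he
              exact hBdisj (g j) ℓ he (u j) (hg j) hj
            exact hgi.trans hgj.symm
        · rintro (h | h)
          · exact Or.inl h
          · exact Or.inr ⟨g i, hg i, h ▸ hg j⟩
      · intro i _
        exact hg i
    · intro hu
      rcases Set.mem_iUnion.mp hu with ⟨g, hu⟩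
      rcases Set.mem_iUnion.mp hu with ⟨hcg, hu⟩
      have hg : ∀ i, u i ∈ B (g i) := fun i => hu i (Set.mem_univ i)
      constructor
      · intro i j
        rw [hcg i j]
        constructor
        · rintro (h | h)
          · exact Or.inl h
          · exact Or.inr ⟨g i, hg i, h ▸ hg j⟩
        · rintro (h | ⟨ℓ, hi, hj⟩)
          · exact Or.inl h
          · refine Or.inr ?_
            by_contra hne
            have hgi : g i = ℓ := by
              by_contra he
              exact hBdisj (g i) ℓ he (u i) (hg i) hi
            have hgj : g j = ℓ := by
              by_contra he
              exact hBdisj (g j) ℓ he (u j) (hg j) hj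
            exact hne (hgi.trans hgj.symm)
      · intro i _
        exact Set.mem_iUnion.mpr ⟨g i, hg i⟩
  -- measure of the decomposition
  have hBoxMeas : ∀ g : Fin n → ℕ, MeasurableSet (Box g) :=
    fun g => MeasurableSet.univ_pi fun i => measurableSet_Ioo
  have hμBox : ∀ g : Fin n → ℕ, μ (Box g) = ENNReal.ofReal (∏ i, x (g i)) := by
    intro g
    rw [hBoxdef, hμdef, Measure.pi_pi]
    simp_rw [hνB]
    rw [ENNReal.ofReal_prod_of_nonneg (fun i _ => hx0 (g i))]
  have hμESum : μ (E ∩ S) = ∑' g : Fin n → ℕ,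
      (if compat g then ENNReal.ofReal (∏ i, x (g i)) else 0) := by
    rw [hES]
    rw [measure_iUnion ?_ ?_]
    · congr 1
      ext g
      rw [Set.iUnion_eq_if]
      by_cases h : compat g
      · rw [if_pos h, if_pos h, hμBox g]
      · rw [if_neg h, if_neg h, measure_empty]
    · intro g g' hne
      have : ∃ i, g i ≠ g' i := by
        by_contra h
        push_neg at h
        exact hne (funext h)
      rcases this with ⟨i, hi⟩
      refine Set.disjoint_left.mpr ?_
      intro u hu hu'
      rw [Set.mem_iUnion] at hu hu'
      rcases hu with ⟨_, hu⟩
      rcases hu' with ⟨_, hu'⟩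
      exact hBdisj (g i) (g' i) hi (u i) (hu i (Set.mem_univ i)) (hu' i (Set.mem_univ i))
    · intro g
      exact MeasurableSet.iUnion fun _ => hBoxMeas g
  -- restrict the tsum to labels coming from the urn
  set Φ : Finset (Fin n → ℕ) :=
    Finset.image (fun f : Fin n → Fin N => fun i => c (f i)) Finset.univ with hΦdef
  have hsupp : ∀ g : Fin n → ℕ, g ∉ Φ →
      (if compat g then ENNReal.ofReal (∏ i, x (g i)) else 0) = 0 := by
    intro g hg
    by_cases h : compat g
    · rw [if_pos h]
      rw [ENNReal.ofReal_eq_zero]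
      by_contra hpos
      push_neg at hpos
      have hxg : ∀ i, 0 < x (g i) := by
        intro i
        rcases lt_or_eq_of_le (hx0 (g i)) with h' | h'
        · exact h'
        · exfalso
          have : (∏ i, x (g i)) = 0 := Finset.prod_eq_zero (Finset.mem_univ i) h'.symm
          rw [this] at hpos
          exact lt_irrefl 0 hpos
      have hfib : ∀ i, ∃ a : Fin N, c a = g i := by
        intro i
        have hcard : (0:ℝ) < ((Finset.univ.filter fun a => c a = g i).card : ℝ) := by
          rw [hc (g i)]
          exact mul_pos (by exact_mod_cast hNpos) (hxg i)
        have : (Finset.univ.filter fun a => c a = g i).Nonempty := by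
          rw [← Finset.card_pos]
          exact_mod_cast hcard
        rcases this with ⟨a, ha⟩
        exact ⟨a, (Finset.mem_filter.mp ha).2⟩
      choose f hf using hfib
      exact hg (Finset.mem_image.mpr ⟨f, Finset.mem_univ f, funext hf⟩)
    · rw [if_neg h]
  have htsum : (∑' g : Fin n → ℕ,
      (if compat g then ENNReal.ofReal (∏ i, x (g i)) else 0)) =
      ∑ g ∈ Φ, (if compat g then ENNReal.ofReal (∏ i, x (g i)) else 0) :=
    tsum_eq_sum hsupp
  -- real-valued formula
  have hpb : paintbox n x P = ∑ g ∈ Φ, (if compat g then (∏ i, x (g i)) else 0) := by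
    rw [paintbox]
    have : {u : Fin n → ℝ | ∀ i j, P i j ↔ (i = j ∨ ∃ ℓ : ℕ,
        u i ∈ Ioo (cumul x ℓ) (cumul x ℓ + x ℓ) ∧
        u j ∈ Ioo (cumul x ℓ) (cumul x ℓ + x ℓ))} = E := rfl
    rw [this, ← hμdef, hμE, hμESum, htsum, ENNReal.toReal_sum]
    · apply Finset.sum_congr rfl
      intro g _
      by_cases h : compat g
      · rw [if_pos h, if_pos h, ENNReal.toReal_ofReal (Finset.prod_nonneg fun i _ => hx0 (g i))]
      · rw [if_neg h, if_neg h, ENNReal.toReal_zero]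
    · intro g _
      by_cases h : compat g
      · rw [if_pos h]; exact ENNReal.ofReal_ne_top
      · rw [if_neg h]; exact ENNReal.zero_ne_top
  -- counting identity (natural numbers)
  set D : Finset (Fin n → Fin N) :=
    Finset.univ.filter (fun f => ∀ i j, P i j ↔ c (f i) = c (f j)) with hDdef
  have hfibcard : ∀ g : Fin n → ℕ,
      (D.filter fun f => (fun i => c (f i)) = g).card =
        if compat g then ∏ i, (Finset.univ.filter fun a => c a = g i).card else 0 := by
    intro g
    by_cases h : compat g
    · rw [if_pos h]
      have heq : (D.filter fun f => (fun i => c (f i)) = g) =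
          Fintype.piFinset (fun i => Finset.univ.filter fun a => c a = g i) := by
        ext f
        simp only [hDdef, Finset.mem_filter, Finset.mem_univ, true_and,
          Fintype.mem_piFinset]
        constructor
        · rintro ⟨_, hfg⟩
          intro i
          exact congrFun hfg i
        · intro hfg
          constructor
          · intro i j
            rw [h i j]
            rw [hfg i, hfg j]
            constructor
            · rintro (rfl | hgg)
              · rfl
              · exact hgg
            · intro hgg
              exact Or.inr hgg
          · exact funext hfg
      rw [heq, Fintype.card_piFinset]
    · rw [if_neg h]
      rw [Finset.card_eq_zero]
      rw [Finset.filter_eq_empty_iff]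
      intro f hf
      rw [hDdef, Finset.mem_filter] at hf
      intro hfg
      apply h
      intro i j
      rw [hf.2 i j]
      have hgi : c (f i) = g i := congrFun hfg i
      have hgj : c (f j) = g j := congrFun hfg j
      rw [hgi, hgj]
      constructor
      · intro hgg
        exact Or.inr hgg
      · rintro (rfl | hgg)
        · rfl
        · exact hgg
  have hcount : D.card = ∑ g ∈ Φ, if compat g then
      ∏ i, (Finset.univ.filter fun a => c a = g i).card else 0 := by
    rw [Finset.card_eq_sum_card_fiberwise (f := fun f => fun i => c (f i)) (t := Φ)
      (fun f _ => Finset.mem_image.mpr ⟨f, Finset.mem_univ f, rfl⟩)]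
    exact Finset.sum_congr rfl fun g _ => hfibcard g
  -- put it together
  rw [hpb]
  rw [eq_div_iff (by positivity : ((N:ℝ)) ^ n ≠ 0)]
  have : (∑ g ∈ Φ, if compat g then (∏ i, x (g i)) else 0) * (N:ℝ) ^ n =
      ∑ g ∈ Φ, if compat g then (∏ i, ((N:ℝ) * x (g i))) else 0 := by
    rw [Finset.sum_mul]
    apply Finset.sum_congr rfl
    intro g _
    by_cases h : compat g
    · rw [if_pos h, if_pos h, Finset.prod_mul_distrib]
      simp [mul_comm]
    · rw [if_neg h, if_neg h, zero_mul]
  rw [this, hcount]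
  push_cast
  apply Finset.sum_congr rfl
  intro g _
  by_cases h : compat g
  · rw [if_pos h, if_pos h]
    apply Finset.prod_congr rfl
    intro i _
    exact (hc (g i)).symm
  · rw [if_neg h, if_neg h]

lemma card_emb {n N : ℕ} (Q : (Fin n → Fin N) → Prop)
    [DecidablePred fun e : Fin n ↪ Fin N => Q ⇑e]
    [DecidablePred fun f : Fin n → Fin N => Q f ∧ Function.Injective f] :
    (Finset.univ.filter fun e : Fin n ↪ Fin N => Q ⇑e).card =
    (Finset.univ.filter fun f : Fin n → Fin N => Q f ∧ Function.Injective f).card := by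
  apply Finset.card_bij (fun (e : Fin n ↪ Fin N) _ => ⇑e)
  · intro e he
    rw [Finset.mem_filter] at he ⊢
    exact ⟨Finset.mem_univ _, he.2, e.injective⟩
  · intro e _ e' _ h
    exact Function.Embedding.coe_injective h
  · intro f hf
    rw [Finset.mem_filter] at hf
    exact ⟨⟨f, hf.2.2⟩, Finset.mem_filter.mpr ⟨Finset.mem_univ _, hf.2.1⟩, rfl⟩

/-- Coupling bound: `|κ^N_n(x,π) − κ∞_n(x,π)| ≤ n²/N` for `x ∈ Δ^N`. -/
theorem stmt8 (N n : ℕ) (hn : 1 ≤ n) (hN : n ≤ N)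
    (x : ℕ → ℝ)
    (hx0 : ∀ i, 0 ≤ x i) (hxa : Antitone x) (hxs : Summable x) (hx1 : ∑' i, x i = 1)
    (hxN : ∀ i, ∃ m : ℕ, (N : ℝ) * x i = m)
    (c : Fin N → ℕ)
    (hc : ∀ ℓ, ((Finset.univ.filter fun a => c a = ℓ).card : ℝ) = (N : ℝ) * x ℓ)
    (P : Fin n → Fin n → Prop) (hP : Equivalence P) :
    |urnKernel N n c P - paintbox n x P| ≤ (n : ℝ) ^ 2 / N := by
  have hNpos : 0 < N := lt_of_lt_of_le hn hN
  set D : Finset (Fin n → Fin N) :=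
    Finset.univ.filter (fun f => ∀ i j, P i j ↔ c (f i) = c (f j)) with hDdef
  set Dinj : Finset (Fin n → Fin N) :=
    Finset.univ.filter (fun f => (∀ i j, P i j ↔ c (f i) = c (f j)) ∧ Function.Injective f)
    with hDinjdef
  set Inj : Finset (Fin n → Fin N) :=
    Finset.univ.filter (fun f => Function.Injective f) with hInjdef
  have hnum : (Finset.univ.filter fun e : Fin n ↪ Fin N =>
      ∀ i j, P i j ↔ c (e i) = c (e j)).card = Dinj.card :=
    card_emb (fun f => ∀ i j, P i j ↔ c (f i) = c (f j))
  have hden : Fintype.card (Fin n ↪ Fin N) = Inj.card := by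
    have h := card_emb (n := n) (N := N) (fun _ => True)
    simpa using h
  -- nat counting facts
  have hDfilter : D.filter (fun f => Function.Injective f) = Dinj := by
    ext f
    simp only [hDdef, hDinjdef, Finset.mem_filter, Finset.mem_univ, true_and, and_comm]
  have hsplitD : Dinj.card +
      (D.filter fun f => ¬ Function.Injective f).card = D.card := by
    rw [← hDfilter]
    exact Finset.card_filter_add_card_filter_not _
  have hsplitU : Inj.card + (Finset.univ.filter fun f : Fin n → Fin N =>
      ¬ Function.Injective f).card = Fintype.card (Fin n → Fin N) := by
    rw [hInjdef, Finset.card_filter_add_card_filter_not, Finset.card_univ]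
  have hbadle : (D.filter fun f => ¬ Function.Injective f).card ≤
      (Finset.univ.filter fun f : Fin n → Fin N => ¬ Function.Injective f).card := by
    apply Finset.card_le_card
    intro f hf
    simp only [Finset.mem_filter, Finset.mem_univ, true_and] at hf ⊢
    exact hf.2
  have hcardfun : Fintype.card (Fin n → Fin N) = N ^ n := by
    rw [Fintype.card_fun, Fintype.card_fin, Fintype.card_fin]
  have hTi : Fintype.card (Fin n ↪ Fin N) = N.descFactorial n := by
    rw [Fintype.card_embedding_eq, Fintype.card_fin, Fintype.card_fin]
  have hInjcard : Inj.card = N.descFactorial n := by rw [← hden, hTi]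
  -- real abbreviations
  set a : ℝ := (Dinj.card : ℝ) with hadef
  set b : ℝ := (D.card : ℝ) with hbdef
  set Ti : ℝ := (N.descFactorial n : ℝ) with hTidef
  set T : ℝ := ((N : ℝ)) ^ n with hTdef
  have hT0 : (0:ℝ) < T := by rw [hTdef]; positivity
  have hTi0 : (0:ℝ) < Ti := by
    rw [hTidef]
    exact_mod_cast Nat.pos_of_ne_zero (by simpa [Nat.descFactorial_eq_zero_iff_lt] using by omega)
  have ha0 : (0:ℝ) ≤ a := by rw [hadef]; positivity
  have haTi : a ≤ Ti := by
    rw [hadef, hTidef, ← hInjcard]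
    have : Dinj ⊆ Inj := by
      intro f hf
      simp only [hDinjdef, hInjdef, Finset.mem_filter] at *
      tauto
    exact_mod_cast Finset.card_le_card this
  have hab : a ≤ b := by
    rw [hadef, hbdef]
    have : Dinj ⊆ D := by
      intro f hf
      simp only [hDinjdef, hDdef, Finset.mem_filter] at *
      tauto
    exact_mod_cast Finset.card_le_card this
  have hbT : b ≤ T := by
    rw [hbdef, hTdef]
    calc (D.card : ℝ) ≤ (Fintype.card (Fin n → Fin N) : ℝ) := by
          exact_mod_cast Finset.card_le_univ D
      _ = ((N:ℝ)) ^ n := by rw [hcardfun]; push_cast; ring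
  have hba : b ≤ a + (T - Ti) := by
    have hnat : D.card + Inj.card ≤ Dinj.card + N ^ n := by omega
    have : b + Ti ≤ a + T := by
      rw [hadef, hbdef, hTidef, hTdef, ← hInjcard]
      have h2 : ((D.card + Inj.card : ℕ) : ℝ) ≤ ((Dinj.card + N ^ n : ℕ) : ℝ) := by
        exact_mod_cast hnat
      push_cast at h2 ⊢
      linarith
    linarith
  have hTiT : Ti ≤ T := by linarith [hba, hab]
  -- the collision bound : T - Ti ≤ (n^2/N) * T
  have hcollision : T - Ti ≤ ((n:ℝ)^2 / N) * T := by
    have hprod : Ti = ∏ k ∈ Finset.range n, ((N:ℝ) - k) := by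
      rw [hTidef, Nat.descFactorial_eq_prod_range]
      rw [Finset.prod_range_natCast_sub]
    have hTprod : T = ∏ _k ∈ Finset.range n, (N:ℝ) := by
      rw [hTdef, Finset.prod_const, Finset.card_range]
    have hratio : Ti / T = ∏ k ∈ Finset.range n, (1 - (k:ℝ)/N) := by
      rw [hprod, hTprod, ← Finset.prod_div_distrib]
      apply Finset.prod_congr rfl
      intro k _
      field_simp
    have hlow : 1 - ∑ k ∈ Finset.range n, (k:ℝ)/N ≤ Ti / T := by
      rw [hratio]
      apply aux_one_sub_sum_le_prod
      · intro k hk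
        positivity
      · intro k hk
        rw [Finset.mem_range] at hk
        rw [div_le_one (by exact_mod_cast hNpos)]
        exact_mod_cast le_trans (le_of_lt hk) hN
    have hsum : ∑ k ∈ Finset.range n, (k:ℝ)/N ≤ (n:ℝ)^2 / N := by
      rw [← Finset.sum_div]
      gcongr
      calc ∑ k ∈ Finset.range n, (k:ℝ) ≤ ∑ _k ∈ Finset.range n, (n:ℝ) := by
            apply Finset.sum_le_sum
            intro k hk
            rw [Finset.mem_range] at hk
            exact_mod_cast le_of_lt hk
        _ = (n:ℝ)^2 := by rw [Finset.sum_const, Finset.card_range]; ring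
    have hfin : 1 - (n:ℝ)^2/N ≤ Ti / T := le_trans (by linarith) hlow
    have h2 : (1 - (n:ℝ)^2/N) * T ≤ Ti := (le_div_iff₀ hT0).mp hfin
    nlinarith [h2]
  -- rewrite the two kernels as ratios
  have hurn : urnKernel N n c P = a / Ti := by
    rw [urnKernel, hTi, hadef, hTidef]
    congr 2
  have hpb : paintbox n x P = b / T := by
    rw [paintbox_eq_count N n hn hN x hx0 hxs hx1 c hc P hP, hbdef, hTdef]
  rw [hurn, hpb, abs_le]
  clear_value a b Ti T
  clear hurn hpb hnum hden hDfilter hsplitD hsplitU hbadle hInjcard hadef hbdef hTidef hTdef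
  clear hDdef hDinjdef hInjdef D Dinj Inj hc hxN hx1 hxs hxa hx0 hP
  have hkey : a/Ti - a/T ≤ (T - Ti)/T := by
    have e1 : a/Ti - a/T = a*(T-Ti)/(Ti*T) := by field_simp
    have e2 : (T-Ti)/T = Ti*(T-Ti)/(Ti*T) := by
      rw [mul_div_mul_left _ _ (ne_of_gt hTi0)]
    rw [e1, e2]
    gcongr
  have hcol : (T - Ti)/T ≤ (n:ℝ)^2/N := by
    rw [div_le_iff₀ hT0]
    exact hcollision
  have habT : a/T ≤ b/T := by gcongr
  constructor
  · have h3 : b/T ≤ (a + (T - Ti))/T := by gcongr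
    rw [add_div] at h3
    have h4 : a/T ≤ a/Ti := by gcongr
    linarith
  · linarith
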